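/- Let a, b be complex sequences of length N, let x1,x2,x3,x4 ∈ {+1,−1} with x1·x2 + x3·x4 = 0, and define the length-4N sequence p = x1·a ∥ x2·b ∥ x3·a ∥ x4·b. Then for every shift 1 ≤ τ ≤ N, the periodic autocorrelation satisfies R_p(τ) = 2·(C_a(τ) + C_b(τ)), where C_a(N) and C_b(N) are interpreted as 0. In particular, if (a,b) is a Golay complementary pair then R_p(τ) = 0 for all 1 ≤ τ ≤ N. -/

import Mathlib

open Finset

/-- Aperiodic cross-correlation of length-`L` complex sequences at shift `0 ≤ τ`. -/
noncomputable def aCorr (a b : ℕ → ℂ) (L τ : ℕ) : ℂ :=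
  ∑ k ∈ Finset.range (L - τ), a k * (starRingEnd ℂ) (b (k + τ))

/-- Periodic cross-correlation of length-`L` complex sequences at shift `τ`. -/
noncomputable def pCorr (a b : ℕ → ℂ) (L τ : ℕ) : ℂ :=
  ∑ k ∈ Finset.range L, a k * (starRingEnd ℂ) (b ((k + τ) % L))

/-- The length-`4N` sequence `x1·a ∥ x2·b ∥ x3·a ∥ x4·b`. -/
noncomputable def quadConcat (N : ℕ) (x1 x2 x3 x4 : ℂ) (a b : ℕ → ℂ) : ℕ → ℂ :=
  fun n =>
    if n < N then x1 * a n
    else if n < 2 * N then x2 * b (n - N)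
    else if n < 3 * N then x3 * a (n - 2 * N)
    else x4 * b (n - 3 * N)

lemma qc0 (N : ℕ) (x1 x2 x3 x4 : ℂ) (a b : ℕ → ℂ) {n : ℕ} (h : n < N) :
    quadConcat N x1 x2 x3 x4 a b n = x1 * a n := by
  simp [quadConcat, h]

lemma qc1 (N : ℕ) (x1 x2 x3 x4 : ℂ) (a b : ℕ → ℂ) {n : ℕ} (h1 : N ≤ n) (h2 : n < 2 * N) :
    quadConcat N x1 x2 x3 x4 a b n = x2 * b (n - N) := by
  rw [quadConcat, if_neg (by omega), if_pos h2]

lemma qc2 (N : ℕ) (x1 x2 x3 x4 : ℂ) (a b : ℕ → ℂ) {n : ℕ} (h1 : 2 * N ≤ n) (h2 : n < 3 * N) :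
    quadConcat N x1 x2 x3 x4 a b n = x3 * a (n - 2 * N) := by
  rw [quadConcat, if_neg (by omega), if_neg (by omega), if_pos h2]

lemma qc3 (N : ℕ) (x1 x2 x3 x4 : ℂ) (a b : ℕ → ℂ) {n : ℕ} (h1 : 3 * N ≤ n) :
    quadConcat N x1 x2 x3 x4 a b n = x4 * b (n - 3 * N) := by
  rw [quadConcat, if_neg (by omega), if_neg (by omega), if_neg (by omega)]

lemma sum_split4 (g : ℕ → ℂ) (N : ℕ) :
    ∑ k ∈ Finset.range (4 * N), g k =
      (∑ i ∈ Finset.range N, g i) + (∑ i ∈ Finset.range N, g (N + i)) +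
      (∑ i ∈ Finset.range N, g (2 * N + i)) + (∑ i ∈ Finset.range N, g (3 * N + i)) := by
  rw [show 4 * N = N + (N + (N + N)) by ring, Finset.sum_range_add, Finset.sum_range_add,
    Finset.sum_range_add, ← add_assoc, ← add_assoc]
  congr 1
  · congr 1
    exact Finset.sum_congr rfl fun i _ => by rw [show N + (N + i) = 2 * N + i by omega]
  · exact Finset.sum_congr rfl fun i _ => by rw [show N + (N + (N + i)) = 3 * N + i by omega]

lemma sum_split_tail (g : ℕ → ℂ) {N τ : ℕ} (h : τ ≤ N) :
    ∑ i ∈ Finset.range N, g i =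
      (∑ i ∈ Finset.range (N - τ), g i) + ∑ i ∈ Finset.range τ, g (N - τ + i) := by
  conv_lhs => rw [show N = (N - τ) + τ by omega]
  rw [Finset.sum_range_add]

theorem statement7 (N : ℕ) (a b : ℕ → ℂ) (x1 x2 x3 x4 : ℂ)
    (hx1 : x1 = 1 ∨ x1 = -1) (hx2 : x2 = 1 ∨ x2 = -1)
    (hx3 : x3 = 1 ∨ x3 = -1) (hx4 : x4 = 1 ∨ x4 = -1)
    (hsum : x1 * x2 + x3 * x4 = 0)
    (p : ℕ → ℂ) (hp : p = quadConcat N x1 x2 x3 x4 a b) :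
    ∀ τ, 1 ≤ τ → τ ≤ N →
      pCorr p p (4 * N) τ = 2 * (aCorr a a N τ + aCorr b b N τ) ∧
      ((∀ t, 1 ≤ t → t ≤ N - 1 → aCorr a a N t + aCorr b b N t = 0) →
        pCorr p p (4 * N) τ = 0) := by
  intro τ hτ1 hτN
  have hN : 1 ≤ N := hτ1.trans hτN
  have c1 : (starRingEnd ℂ) x1 = x1 := by rcases hx1 with rfl | rfl <;> simp
  have c2 : (starRingEnd ℂ) x2 = x2 := by rcases hx2 with rfl | rfl <;> simp
  have c3 : (starRingEnd ℂ) x3 = x3 := by rcases hx3 with rfl | rfl <;> simp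
  have c4 : (starRingEnd ℂ) x4 = x4 := by rcases hx4 with rfl | rfl <;> simp
  have s1 : x1 * x1 = 1 := by rcases hx1 with rfl | rfl <;> norm_num
  have s2 : x2 * x2 = 1 := by rcases hx2 with rfl | rfl <;> norm_num
  have s3 : x3 * x3 = 1 := by rcases hx3 with rfl | rfl <;> norm_num
  have s4 : x4 * x4 = 1 := by rcases hx4 with rfl | rfl <;> norm_num
  have key2 : x2 * x3 + x4 * x1 = 0 := by
    rcases hx1 with rfl | rfl <;> rcases hx2 with rfl | rfl <;> rcases hx3 with rfl | rfl <;>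
      rcases hx4 with rfl | rfl <;> (revert hsum; norm_num)
  set T1 : ℂ := ∑ i ∈ Finset.range τ, a (N - τ + i) * (starRingEnd ℂ) (b i) with hT1
  set T2 : ℂ := ∑ i ∈ Finset.range τ, b (N - τ + i) * (starRingEnd ℂ) (a i) with hT2
  have main : pCorr p p (4 * N) τ = 2 * (aCorr a a N τ + aCorr b b N τ) := by
    subst hp
    set q := quadConcat N x1 x2 x3 x4 a b with hq
    have B0 : ∑ i ∈ Finset.range N, q i * (starRingEnd ℂ) (q ((i + τ) % (4 * N))) =
        aCorr a a N τ + x1 * x2 * T1 := by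
      rw [sum_split_tail _ hτN]
      congr 1
      · rw [aCorr]
        refine Finset.sum_congr rfl fun i hi => ?_
        simp only [Finset.mem_range] at hi
        rw [Nat.mod_eq_of_lt (by omega), hq, qc0 _ _ _ _ _ _ _ (by omega),
          qc0 _ _ _ _ _ _ _ (by omega), map_mul, c1]
        linear_combination a i * (starRingEnd ℂ) (a (i + τ)) * s1
      · rw [hT1, Finset.mul_sum]
        refine Finset.sum_congr rfl fun i hi => ?_
        simp only [Finset.mem_range] at hi
        rw [show N - τ + i + τ = N + i by omega, Nat.mod_eq_of_lt (by omega), hq,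
          qc0 _ _ _ _ _ _ _ (by omega), qc1 _ _ _ _ _ _ _ (by omega) (by omega),
          show N + i - N = i by omega, map_mul, c2]
        ring
    have B1 : ∑ i ∈ Finset.range N, q (N + i) * (starRingEnd ℂ) (q ((N + i + τ) % (4 * N))) =
        aCorr b b N τ + x2 * x3 * T2 := by
      rw [sum_split_tail _ hτN]
      congr 1
      · rw [aCorr]
        refine Finset.sum_congr rfl fun i hi => ?_
        simp only [Finset.mem_range] at hi
        rw [Nat.mod_eq_of_lt (by omega), hq, qc1 _ _ _ _ _ _ _ (by omega) (by omega),
          qc1 _ _ _ _ _ _ _ (by omega) (by omega), show N + i - N = i by omega,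
          show N + i + τ - N = i + τ by omega, map_mul, c2]
        linear_combination b i * (starRingEnd ℂ) (b (i + τ)) * s2
      · rw [hT2, Finset.mul_sum]
        refine Finset.sum_congr rfl fun i hi => ?_
        simp only [Finset.mem_range] at hi
        rw [show N + (N - τ + i) + τ = 2 * N + i by omega, Nat.mod_eq_of_lt (by omega), hq,
          qc1 _ _ _ _ _ _ _ (by omega) (by omega), qc2 _ _ _ _ _ _ _ (by omega) (by omega),
          show N + (N - τ + i) - N = N - τ + i by omega, show 2 * N + i - 2 * N = i by omega,
          map_mul, c3]
        ring
    have B2 : ∑ i ∈ Finset.range N, q (2 * N + i) * (starRingEnd ℂ) (q ((2 * N + i + τ) % (4 * N))) =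
        aCorr a a N τ + x3 * x4 * T1 := by
      rw [sum_split_tail _ hτN]
      congr 1
      · rw [aCorr]
        refine Finset.sum_congr rfl fun i hi => ?_
        simp only [Finset.mem_range] at hi
        rw [Nat.mod_eq_of_lt (by omega), hq, qc2 _ _ _ _ _ _ _ (by omega) (by omega),
          qc2 _ _ _ _ _ _ _ (by omega) (by omega), show 2 * N + i - 2 * N = i by omega,
          show 2 * N + i + τ - 2 * N = i + τ by omega, map_mul, c3]
        linear_combination a i * (starRingEnd ℂ) (a (i + τ)) * s3
      · rw [hT1, Finset.mul_sum]
        refine Finset.sum_congr rfl fun i hi => ?_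
        simp only [Finset.mem_range] at hi
        rw [show 2 * N + (N - τ + i) + τ = 3 * N + i by omega, Nat.mod_eq_of_lt (by omega), hq,
          qc2 _ _ _ _ _ _ _ (by omega) (by omega), qc3 _ _ _ _ _ _ _ (by omega),
          show 2 * N + (N - τ + i) - 2 * N = N - τ + i by omega,
          show 3 * N + i - 3 * N = i by omega, map_mul, c4]
        ring
    have B3 : ∑ i ∈ Finset.range N, q (3 * N + i) * (starRingEnd ℂ) (q ((3 * N + i + τ) % (4 * N))) =
        aCorr b b N τ + x4 * x1 * T2 := by
      rw [sum_split_tail _ hτN]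
      congr 1
      · rw [aCorr]
        refine Finset.sum_congr rfl fun i hi => ?_
        simp only [Finset.mem_range] at hi
        rw [Nat.mod_eq_of_lt (by omega), hq, qc3 _ _ _ _ _ _ _ (by omega),
          qc3 _ _ _ _ _ _ _ (by omega), show 3 * N + i - 3 * N = i by omega,
          show 3 * N + i + τ - 3 * N = i + τ by omega, map_mul, c4]
        linear_combination b i * (starRingEnd ℂ) (b (i + τ)) * s4
      · rw [hT2, Finset.mul_sum]
        refine Finset.sum_congr rfl fun i hi => ?_
        simp only [Finset.mem_range] at hi
        rw [show 3 * N + (N - τ + i) + τ = 4 * N + i by omega,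
          Nat.add_mod_left, Nat.mod_eq_of_lt (show i < 4 * N by omega), hq,
          qc3 _ _ _ _ _ _ _ (by omega), qc0 _ _ _ _ _ _ _ (by omega),
          show 3 * N + (N - τ + i) - 3 * N = N - τ + i by omega, map_mul, c1]
        ring
    rw [pCorr, sum_split4, B0, B1, B2, B3]
    linear_combination T1 * hsum + T2 * key2
  refine ⟨main, fun hg => ?_⟩
  rw [main]
  rcases eq_or_lt_of_le hτN with rfl | hlt
  · simp [aCorr]
  · rw [hg τ hτ1 (by omega)]; ring
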